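/- Let n be even, n ≥ 4, let t_i = cos(πi/n) for 0 ≤ i ≤ n, and set P(x) = (x²-1)T_n'(x) and q(x) = (1/n²)·P(x)·Σ_{i=1}^{(n-2)/2} (1/(x-t_i) - 1/(x+t_i)). Then q is a polynomial of degree at most n, and |q(t_j)| ≤ 1 for every 0 ≤ j ≤ n. -/

import Mathlib

open Real

/-- Derivative of the Chebyshev polynomial, as a real function. -/
noncomputable def Tch' (n : ℕ) (x : ℝ) : ℝ :=
  (Polynomial.derivative (Polynomial.Chebyshev.T ℝ n)).eval x

section helpers
open Polynomial Polynomial.Chebyshev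

lemma my_natDegree_T_le (k : ℕ) : (T ℝ (k:ℤ)).natDegree ≤ k := by
  induction k using Nat.strong_induction_on with
  | _ k ih =>
    match k with
    | 0 => simp [Polynomial.Chebyshev.T_zero]
    | 1 => simp [Polynomial.Chebyshev.T_one]
    | (k+2) =>
      have h := T_add_two ℝ (k:ℤ)
      push_cast at h ⊢
      rw [h]
      refine le_trans (natDegree_sub_le _ _) ?_
      have h1 : (2 * X * T ℝ (k+1)).natDegree ≤ k + 2 := by
        refine le_trans (natDegree_mul_le) ?_
        have : (2 * X : Polynomial ℝ).natDegree ≤ 1 := by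
          refine le_trans (natDegree_mul_le) ?_
          simp
        have h2 := ih (k+1) (by omega)
        push_cast at h2
        omega
      have h3 := ih k (by omega)
      omega

lemma dT_cos (n : ℕ) (θ : ℝ) :
    (derivative (T ℝ (n:ℤ))).eval (cos θ) * sin θ = n * sin (n * θ) := by
  rw [T_derivative_eq_U]
  have h := U_real_cos θ ((n:ℤ) - 1)
  simp only [Int.cast_sub, Int.cast_one, sub_add_cancel] at h
  simp only [eval_mul, eval_intCast, Int.cast_natCast, eval_natCast]
  rw [mul_assoc, h]
  push_cast
  ring

lemma P_cos (n : ℕ) (θ : ℝ) :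
    ((X^2 - 1) * derivative (T ℝ (n:ℤ))).eval (cos θ) = -(n * sin θ * sin (n * θ)) := by
  have h := dT_cos n θ
  have hs := sin_sq_add_cos_sq θ
  simp only [eval_mul, eval_sub, eval_pow, eval_X, eval_one]
  linear_combination (eval (cos θ) (derivative (T ℝ (n:ℤ)))) * hs + (-sin θ) * h

lemma P'_cos (n : ℕ) (θ : ℝ) :
    (derivative ((X^2-1) * derivative (T ℝ (n:ℤ)))).eval (cos θ) * sin θ
      = n * cos θ * sin (n*θ) + (n:ℝ)^2 * sin θ * cos (n*θ) := by
  set P : Polynomial ℝ := (X^2-1) * derivative (T ℝ (n:ℤ)) with hP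
  have h1 : HasDerivAt (fun θ : ℝ => P.eval (cos θ))
      ((derivative P).eval (cos θ) * -sin θ) θ :=
    (P.hasDerivAt (cos θ)).comp θ (Real.hasDerivAt_cos θ)
  have heq : (fun θ : ℝ => P.eval (cos θ))
      = fun θ : ℝ => -((n:ℝ) * sin θ * sin (n * θ)) := funext fun θ => P_cos n θ
  rw [heq] at h1
  have h2 : HasDerivAt (fun θ : ℝ => -((n:ℝ) * sin θ * sin (n * θ)))
      (-((n:ℝ) * cos θ * sin (n*θ) + (n:ℝ) * sin θ * (cos (n*θ) * n))) θ := by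
    have hs : HasDerivAt (fun θ : ℝ => (n:ℝ) * sin θ) ((n:ℝ) * cos θ) θ :=
      (Real.hasDerivAt_sin θ).const_mul _
    have hsn : HasDerivAt (fun θ : ℝ => sin ((n:ℝ) * θ)) (cos ((n:ℝ)*θ) * (n:ℝ)) θ := by
      simpa [Function.comp_def] using
        (Real.hasDerivAt_sin ((n:ℝ)*θ)).comp θ ((hasDerivAt_id θ).const_mul (n:ℝ))
    have := (hs.mul hsn).neg
    exact this
  have hu := h1.unique h2
  linear_combination (-1 : ℝ) * hu

end helpers

open Polynomial Polynomial.Chebyshev in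
theorem stmt_15 (n : ℕ) (hn : 4 ≤ n) (hev : Even n)
    (t : ℕ → ℝ) (htdef : ∀ i, t i = Real.cos (π * i / n)) :
    ∃ Q : Polynomial ℝ, Q.natDegree ≤ n ∧
      (∀ x : ℝ, (∀ i ∈ Finset.Icc 1 ((n - 2) / 2), x ≠ t i ∧ x ≠ -(t i)) →
        Q.eval x = (1 / (n : ℝ) ^ 2) * ((x ^ 2 - 1) * Tch' n x) *
          ∑ i ∈ Finset.Icc 1 ((n - 2) / 2), (1 / (x - t i) - 1 / (x + t i))) ∧
      (∀ j ≤ n, |Q.eval (t j)| ≤ 1) := by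
  obtain ⟨c, hc⟩ := hev
  set m := (n - 2) / 2 with hmdef
  have hm : 2 * m + 2 = n := by omega
  have hn0 : (n : ℝ) ≠ 0 := by positivity
  have hnpos : (0:ℝ) < n := by positivity
  set S := Finset.Icc 1 m with hSdef
  set P : Polynomial ℝ := (X^2 - 1) * derivative (T ℝ (n:ℤ)) with hPdef
  -- basic trig facts
  have hnθ : ∀ j : ℕ, (n:ℝ) * (π * j / n) = π * j := fun j => by field_simp
  have hsinn : ∀ j : ℕ, sin ((n:ℝ) * (π * j / n)) = 0 := fun j => by
    rw [hnθ, mul_comm]; exact sin_nat_mul_pi j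
  have hcosn : ∀ j : ℕ, cos ((n:ℝ) * (π * j / n)) = (-1)^j := fun j => by
    rw [hnθ, mul_comm]; simpa using cos_nat_mul_pi_sub 0 j
  -- all nodes are roots of P
  have hroot : ∀ j : ℕ, P.eval (t j) = 0 := fun j => by
    rw [htdef]; rw [hPdef, P_cos n (π * j / n), hsinn]; ring
  -- strict decrease and injectivity
  have hlt : ∀ i j : ℕ, i < j → j ≤ n → t j < t i := by
    intro i j hij hjn
    rw [htdef, htdef]
    apply cos_lt_cos_of_nonneg_of_le_pi
    · positivity
    · rw [div_le_iff₀ hnpos]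
      have : (j:ℝ) ≤ n := by exact_mod_cast hjn
      nlinarith [pi_pos]
    · have hij' : (i:ℝ) < j := by exact_mod_cast hij
      gcongr
  have hinj : ∀ i j : ℕ, i ≤ n → j ≤ n → i ≠ j → t i ≠ t j := by
    intro i j hi hj hij
    rcases lt_or_gt_of_ne hij with h | h
    · exact (hlt i j h hj).ne'
    · exact (hlt j i h hi).ne
  -- -(t i) = t (n - i)
  have hneg : ∀ i : ℕ, i ≤ n → -(t i) = t (n - i) := by
    intro i hi
    rw [htdef, htdef, ← Real.cos_pi_sub]
    congr 1
    rw [Nat.cast_sub hi]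
    field_simp
  -- derivative values
  have hP' : ∀ j : ℕ, 1 ≤ j → j < n → (derivative P).eval (t j) = (n:ℝ)^2 * (-1)^j := by
    intro j h1 h2
    have key := P'_cos n (π * j / n)
    rw [hsinn, hcosn] at key
    have hsj : sin (π * j / n) ≠ 0 := by
      apply ne_of_gt
      apply sin_pos_of_pos_of_lt_pi
      · have : (0:ℝ) < j := by exact_mod_cast h1
        positivity
      · rw [div_lt_iff₀ hnpos]
        have : (j:ℝ) < n := by exact_mod_cast h2
        nlinarith [pi_pos]
    rw [htdef, hPdef]
    apply mul_right_cancel₀ hsj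
    linear_combination key
  -- quotient polynomials
  set q : ℝ → Polynomial ℝ := fun a => P /ₘ (X - C a) with hqdef
  have hfac : ∀ a : ℝ, P.eval a = 0 → (X - C a) * q a = P := fun a ha =>
    (mul_divByMonic_eq_iff_isRoot).mpr ha
  have heval : ∀ a x : ℝ, P.eval a = 0 → x ≠ a → (q a).eval x = P.eval x / (x - a) := by
    intro a x ha hx
    have h := congrArg (Polynomial.eval x) (hfac a ha)
    simp only [eval_mul, eval_sub, eval_X, eval_C] at h
    rw [eq_div_iff (sub_ne_zero.mpr hx)]
    linear_combination h
  have hder : ∀ a : ℝ, P.eval a = 0 → (q a).eval a = (derivative P).eval a := by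
    intro a ha
    have h := congrArg (fun p => (derivative p).eval a) (hfac a ha)
    simpa only [derivative_mul, derivative_X_sub_C, one_mul, eval_add, eval_mul,
      eval_sub, eval_X, eval_C, sub_self, zero_mul, add_zero] using h
  have hdegP : P.natDegree ≤ n + 1 := by
    rw [hPdef]
    refine le_trans natDegree_mul_le ?_
    have h1 : ((X:ℝ[X])^2 - 1).natDegree ≤ 2 := by
      refine le_trans (natDegree_sub_le _ _) ?_
      simp [natDegree_X_pow]
    have h2 : (derivative (T ℝ (n:ℤ))).natDegree ≤ n - 1 :=
      le_trans (natDegree_derivative_le _) (by have := my_natDegree_T_le n; omega)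
    omega
  have hdegq : ∀ a : ℝ, (q a).natDegree ≤ n := by
    intro a
    have h := natDegree_divByMonic P (monic_X_sub_C a)
    rw [natDegree_X_sub_C] at h
    show (P /ₘ (X - C a)).natDegree ≤ n
    omega
  refine ⟨C ((1:ℝ)/n^2) * ∑ i ∈ S, (q (t i) - q (-(t i))), ?_, ?_, ?_⟩
  · refine le_trans natDegree_mul_le ?_
    rw [natDegree_C, zero_add]
    refine Polynomial.natDegree_sum_le_of_forall_le (s := S) _ ?_
    intro i hi
    exact le_trans (natDegree_sub_le _ _) (by simp [hdegq])
  · intro x hx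
    have hroots : ∀ i ∈ S, P.eval (t i) = 0 ∧ P.eval (-(t i)) = 0 := by
      intro i hi
      refine ⟨hroot i, ?_⟩
      rw [hneg i (le_trans (Finset.mem_Icc.mp hi).2 (by omega))]
      exact hroot _
    rw [eval_mul, eval_C, eval_finset_sum]
    have hPx : P.eval x = (x^2 - 1) * Tch' n x := by
      rw [hPdef]; simp [Tch']
    have hcongr : ∀ i ∈ S, ((q (t i) - q (-(t i))).eval x)
        = P.eval x * (1/(x - t i) - 1/(x + t i)) := by
      intro i hi
      obtain ⟨hx1, hx2⟩ := hx i hi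
      obtain ⟨r1, r2⟩ := hroots i hi
      rw [eval_sub, heval _ _ r1 hx1, heval _ _ r2 hx2]
      rw [show x - -(t i) = x + t i by ring]
      rw [div_eq_mul_one_div, div_eq_mul_one_div (P.eval x) (x + t i), ← mul_sub]
    rw [Finset.sum_congr rfl hcongr, ← Finset.mul_sum, hPx]
    ring
  · intro j hj
    have hterm : ∀ i ∈ S, ((q (t i) - q (-(t i))).eval (t j))
        = (if i = j then (n:ℝ)^2*(-1:ℝ)^j else 0)
          - (if i = n - j then (n:ℝ)^2*(-1:ℝ)^j else 0) := by
      intro i hi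
      obtain ⟨hi1, hi2⟩ := Finset.mem_Icc.mp hi
      have hin : i ≤ n := by omega
      have hnin : n - i ≤ n := by omega
      rw [eval_sub]
      congr 1
      · by_cases h : i = j
        · subst h
          rw [if_pos rfl, hder _ (hroot i), hP' i hi1 (by omega)]
        · rw [if_neg h, heval _ _ (hroot i) (hinj j i hj hin (fun e => h e.symm)),
            hroot, zero_div]
      · rw [hneg i hin]
        by_cases h : i = n - j
        · rw [if_pos h, show n - i = j by omega, hder _ (hroot j),
            hP' j (by omega) (by omega)]
        · rw [if_neg h, heval _ _ (hroot (n - i)) (hinj j (n - i) hj hnin (by omega)),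
            hroot, zero_div]
    rw [eval_mul, eval_C, eval_finset_sum, Finset.sum_congr rfl hterm,
      Finset.sum_sub_distrib, Finset.sum_ite_eq' S j, Finset.sum_ite_eq' S (n - j)]
    have hval : (1/(n:ℝ)^2) * ((n:ℝ)^2*(-1:ℝ)^j) = (-1:ℝ)^j := by field_simp
    have habs : |(-1:ℝ)^j| = 1 := by rw [abs_pow, abs_neg, abs_one, one_pow]
    by_cases h1 : j ∈ S
    · have h2 : n - j ∉ S := by
        simp only [hSdef, Finset.mem_Icc] at h1 ⊢; omega
      rw [if_pos h1, if_neg h2, sub_zero, hval, habs]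
    · by_cases h2 : n - j ∈ S
      · rw [if_neg h1, if_pos h2, zero_sub, mul_neg, hval, abs_neg, habs]
      · rw [if_neg h1, if_neg h2, sub_zero, mul_zero, abs_zero]
        norm_num
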